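/- Let (s₁, s₂) ∈ {−1, +1}² and λ = λ(s₁, s₂). Then 2 K_m K_p' + 2 K_p K_m' − J_p J_m = −4 (p cosh(2γ) − s₂ a_p √(1 + p² sinh²(2γ)))(p cosh(2γ) − s₂ a_m √(1 + p² sinh²(2γ))). -/

import Mathlib

noncomputable section
open Complex Matrix

/-- `K_* = p λ − a_* e^{−2γ}` (real `λ`). -/
def Kre (γ p aS lam : ℝ) : ℝ := p * lam - aS * Real.exp (-(2 * γ))

/-- `K_*' = a_* e^{2γ} − p λ⁻¹` (real `λ`). -/
def Kre' (γ p aS lam : ℝ) : ℝ := aS * Real.exp (2 * γ) - p * lam⁻¹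

/-- `J_* = λ − λ⁻¹ + 2 p a_* sinh(2γ)` (real `λ`). -/
def Jre (γ p aS lam : ℝ) : ℝ := lam - lam⁻¹ + 2 * p * aS * Real.sinh (2 * γ)

/-- `λ(s₁, s₂) = s₁ p sinh(2γ) + s₂ √(1 + p² sinh²(2γ))`. -/
def lamSS (γ p s₁ s₂ : ℝ) : ℝ :=
  s₁ * p * Real.sinh (2 * γ) + s₂ * Real.sqrt (1 + p ^ 2 * Real.sinh (2 * γ) ^ 2)

/-- Identity for `2 K_m K_p' + 2 K_p K_m' − J_p J_m` at `λ = λ(s₁, s₂)`. -/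
theorem identity_at_lamSS (γ p : ℝ) (hp : p ∈ Set.Ioo (-1 : ℝ) 1) (q : ℂ)
    (hq : p ^ 2 + ‖q‖ ^ 2 = 1)
    (aP aM : ℝ) (haP : aP ∈ Set.Ioo (-1 : ℝ) 1) (haM : aM ∈ Set.Ioo (-1 : ℝ) 1)
    (s₁ s₂ : ℝ) (hs₁ : s₁ = 1 ∨ s₁ = -1) (hs₂ : s₂ = 1 ∨ s₂ = -1) :
    2 * Kre γ p aM (lamSS γ p s₁ s₂) * Kre' γ p aP (lamSS γ p s₁ s₂) +
        2 * Kre γ p aP (lamSS γ p s₁ s₂) * Kre' γ p aM (lamSS γ p s₁ s₂) -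
        Jre γ p aP (lamSS γ p s₁ s₂) * Jre γ p aM (lamSS γ p s₁ s₂) =
      -4 * (p * Real.cosh (2 * γ) -
          s₂ * aP * Real.sqrt (1 + p ^ 2 * Real.sinh (2 * γ) ^ 2)) *
        (p * Real.cosh (2 * γ) -
          s₂ * aM * Real.sqrt (1 + p ^ 2 * Real.sinh (2 * γ) ^ 2)) := by

  have hs1 : s₁ ^ 2 = 1 := by rcases hs₁ with h | h <;> rw [h] <;> norm_num
  have hs2 : s₂ ^ 2 = 1 := by rcases hs₂ with h | h <;> rw [h] <;> norm_num
  set sh := Real.sinh (2 * γ) with hsh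
  set ch := Real.cosh (2 * γ) with hch
  set r := Real.sqrt (1 + p ^ 2 * sh ^ 2) with hr
  have hr2 : r ^ 2 = 1 + p ^ 2 * sh ^ 2 := by
    rw [hr]; exact Real.sq_sqrt (by positivity)
  have hch2 : ch ^ 2 = 1 + sh ^ 2 := by
    rw [hch, hsh, Real.cosh_sq]; ring
  have he2 : Real.exp (2 * γ) = ch + sh := (Real.cosh_add_sinh _).symm
  have hem : Real.exp (-(2 * γ)) = ch - sh := (Real.cosh_sub_sinh _).symm
  have hlam : lamSS γ p s₁ s₂ = s₁ * p * sh + s₂ * r := rfl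
  have hinv : (s₁ * p * sh + s₂ * r)⁻¹ = -(s₁ * p * sh) + s₂ * r := by
    refine inv_eq_of_mul_eq_one_right ?_
    nlinarith [hr2, hs1, hs2]
  simp only [Kre, Kre', Jre, hlam, hinv, he2, hem]
  linear_combination (4*p^4*sh^2 - 4*p^2*sh^2) * hs1 +
    (-4*p^2*r^2 + 4*r^2*aP*aM) * hs2 + (-4*p^2 + 4*aP*aM) * hr2 +
    (4*p^2 - 4*aP*aM) * hch2
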